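/- Let (Ω, F, P) be a probability space, A ∈ F, G a sub-σ-field of F, and X = E[1_A | G]. For an integer n > 1, let Gₙ be the σ-field generated by the sets {ω : k/n ≤ X(ω) < (k+1)/n} for 0 ≤ k ≤ n, and let Xₙ = E[1_A | Gₙ]. Then P(|Xₙ − X| ≤ 1/n) = 1. -/

import Mathlib

open MeasureTheory

/-- Discretization: with X = E[1_A | G] and Gₙ generated by the level sets
{k/n ≤ X < (k+1)/n}, 0 ≤ k ≤ n, and Xₙ = E[1_A | Gₙ], one has
P(|Xₙ − X| ≤ 1/n) = 1. -/
theorem discretized_condexp_close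
    {Ω : Type} {F : MeasurableSpace Ω} (P : Measure Ω) [IsProbabilityMeasure P]
    (A : Set Ω) (hA : MeasurableSet A)
    (G : MeasurableSpace Ω) (hG : G ≤ F)
    (X : Ω → ℝ) (hX : X = P[A.indicator (fun _ => (1 : ℝ)) | G])
    (n : ℕ) (hn : 1 < n)
    (Gn : MeasurableSpace Ω)
    (hGn : Gn = MeasurableSpace.generateFrom
      {s | ∃ k : ℕ, k ≤ n ∧ s = {ω | (k : ℝ) / n ≤ X ω ∧ X ω < ((k : ℝ) + 1) / n}}) :
    P {ω | |(P[A.indicator (fun _ => (1 : ℝ)) | Gn]) ω - X ω| ≤ 1 / n} = 1 := by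
  have hn0 : (0:ℝ) < n := by positivity
  set f : Ω → ℝ := A.indicator (fun _ => (1 : ℝ)) with hfdef
  have hf_int : Integrable f P := by
    have hA' : MeasurableSet[F] A := hA
    exact (integrable_const (1:ℝ)).indicator hA'
  set S : ℕ → Set Ω := fun k => {ω | (k : ℝ) / n ≤ X ω ∧ X ω < ((k : ℝ) + 1) / n} with hS
  -- X is G-strongly measurable
  have hXsm : StronglyMeasurable[G] X := hX ▸ stronglyMeasurable_condExp
  have hSG : ∀ k, MeasurableSet[G] (S k) := by
    intro k
    have : S k = X ⁻¹' Set.Ico ((k:ℝ)/n) (((k:ℝ)+1)/n) := rfl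
    rw [this]
    exact hXsm.measurable measurableSet_Ico
  have hGnG : Gn ≤ G := by
    rw [hGn]
    refine MeasurableSpace.generateFrom_le ?_
    rintro s ⟨k, hk, rfl⟩
    exact hSG k
  have hGnF : Gn ≤ F := hGnG.trans hG
  have hSGn : ∀ k, k ≤ n → MeasurableSet[Gn] (S k) := by
    intro k hk
    rw [hGn]
    exact MeasurableSpace.measurableSet_generateFrom ⟨k, hk, rfl⟩
  -- the step function Y
  set Y : Ω → ℝ := fun ω => ∑ k ∈ Finset.range (n+1), (S k).indicator (fun _ => (k:ℝ)/n) ω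
    with hY
  have hYsm : StronglyMeasurable[Gn] Y := by
    apply Measurable.stronglyMeasurable
    refine Finset.measurable_sum _ ?_
    intro k hk
    exact Measurable.indicator measurable_const (hSGn k (Nat.lt_succ_iff.mp (Finset.mem_range.mp hk)))
  have hY_int : Integrable Y P := by
    refine integrable_finset_sum _ ?_
    intro k hk
    exact (integrable_const ((k:ℝ)/(n:ℝ))).indicator (hG _ (hSG k))
  -- pointwise key fact
  have hpt : ∀ ω, 0 ≤ X ω → X ω ≤ 1 → Y ω ≤ X ω ∧ X ω < Y ω + 1/n := by
    intro ω h0 h1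
    set a : ℝ := (n:ℝ) * X ω with ha
    have ha0 : 0 ≤ a := by positivity
    set k0 : ℕ := ⌊a⌋₊ with hk0
    have hk0le : (k0:ℝ) ≤ a := Nat.floor_le ha0
    have halt : a < (k0:ℝ) + 1 := Nat.lt_floor_add_one a
    have hk0n : k0 ≤ n := by
      have : (k0:ℝ) ≤ (n:ℝ) := le_trans hk0le (by nlinarith)
      exact_mod_cast this
    have hmem : ω ∈ S k0 := by
      constructor
      · rw [div_le_iff₀ hn0]; nlinarith
      · rw [lt_div_iff₀ hn0]; nlinarith
    have hYval : Y ω = (k0:ℝ)/n := by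
      have hYe : Y ω = ∑ k ∈ Finset.range (n+1), (S k).indicator (fun _ => (k:ℝ)/n) ω := rfl
      rw [hYe]
      rw [Finset.sum_eq_single_of_mem k0 (Finset.mem_range.mpr (Nat.lt_succ_of_le hk0n))]
      · exact Set.indicator_of_mem hmem _
      · intro j hj hjne
        apply Set.indicator_of_notMem
        intro hjmem
        apply hjne
        have h1' : (j:ℝ) ≤ a := by
          have := hjmem.1
          rw [div_le_iff₀ hn0] at this; nlinarith
        have h2' : a < (j:ℝ) + 1 := by
          have := hjmem.2
          rw [lt_div_iff₀ hn0] at this; nlinarith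
        exact (Nat.floor_eq_iff ha0).mpr ⟨h1', h2'⟩ |>.symm ▸ rfl
    constructor
    · rw [hYval]; rw [div_le_iff₀ hn0]; nlinarith
    · rw [hYval, ← add_div ]
      rw [lt_div_iff₀ hn0]; nlinarith
  -- a.e. bounds on X
  have hX0 : 0 ≤ᵐ[P] X := by
    rw [hX]
    exact condExp_nonneg (ae_of_all _ fun ω => Set.indicator_nonneg (fun _ _ => zero_le_one) ω)
  have hX1 : X ≤ᵐ[P] fun _ => (1:ℝ) := by
    have h := condExp_mono (m := G) (μ := P) hf_int (integrable_const (1:ℝ))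
      (ae_of_all _ fun ω => by
        by_cases hω : ω ∈ A <;> simp [hfdef, Set.indicator, hω])
    rw [condExp_const hG] at h
    rw [hX]
    exact h
  have hYX : Y ≤ᵐ[P] X := by
    filter_upwards [hX0, hX1] with ω h0 h1
    exact (hpt ω h0 h1).1
  have hXY : X ≤ᵐ[P] fun ω => Y ω + 1/n := by
    filter_upwards [hX0, hX1] with ω h0 h1
    exact le_of_lt (hpt ω h0 h1).2
  -- tower property
  have htower : P[f|Gn] =ᵐ[P] P[X|Gn] := by
    rw [hX]
    exact (condExp_condExp_of_le hGnG hG).symm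
  have hX_int : Integrable X P := hX ▸ integrable_condExp
  have hZ_int : Integrable (fun ω => Y ω + 1/n) P := hY_int.add (integrable_const _)
  have hlow : Y ≤ᵐ[P] P[X|Gn] := by
    have h := condExp_mono (m := Gn) (μ := P) hY_int hX_int hYX
    rwa [condExp_of_stronglyMeasurable hGnF hYsm hY_int] at h
  have hZsm : StronglyMeasurable[Gn] (fun ω => Y ω + 1/n) := by
    exact hYsm.add stronglyMeasurable_const
  have hhigh : P[X|Gn] ≤ᵐ[P] fun ω => Y ω + 1/n := by
    have h := condExp_mono (m := Gn) (μ := P) hX_int hZ_int hXY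
    rwa [condExp_of_stronglyMeasurable hGnF hZsm hZ_int] at h
  -- conclude
  set s : Set Ω := {ω | |(P[f|Gn]) ω - X ω| ≤ 1/n} with hs
  have hae : ∀ᵐ ω ∂P, ω ∈ s := by
    filter_upwards [htower, hlow, hhigh, hYX, hXY] with ω ht hl hh h1 h2
    simp only [hs, Set.mem_setOf_eq, ht]
    rw [abs_sub_le_iff]
    constructor <;> [skip; skip] <;>
      · have := hl; have := hh; have := h1; have := h2
        linarith
  have hcompl : P sᶜ = 0 := by
    have h := hae
    rw [MeasureTheory.ae_iff] at h
    rw [show sᶜ = {ω | ¬ ω ∈ s} from rfl]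
    exact h
  refine le_antisymm prob_le_one ?_
  have hunion : P Set.univ ≤ P s + P sᶜ := by
    rw [← Set.union_compl_self s]
    exact measure_union_le _ _
  rw [measure_univ, hcompl, add_zero] at hunion
  exact hunion
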